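/- Let H be a complex Hilbert space, let A, B be bounded linear operators on H, and let D be a Moore–Penrose inverse of A + B such that A∘D∘(A+B) = A and (A+B)∘D∘B = B. Then the following are equivalent: (i) both A and B have Moore–Penrose inverses; (ii) the parallel sum A∘D∘B has a Moore–Penrose inverse. -/

import Mathlib

open ContinuousLinearMap

variable {H : Type*} [NormedAddCommGroup H] [InnerProductSpace ℂ H] [CompleteSpace H]

/-- `X` is a Moore–Penrose inverse of `T`. -/
def IsMPInv (T X : H →L[ℂ] H) : Prop :=
  T ∘L X ∘L T = T ∧ X ∘L T ∘L X = X ∧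
    adjoint (T ∘L X) = T ∘L X ∧ adjoint (X ∘L T) = X ∘L T

/-- If `T * (G * T) = T` for some bounded `G`, then `T` has closed range. -/
lemma aux_closed_range (T G : H →L[ℂ] H) (h : T * (G * T) = T) :
    IsClosed (LinearMap.range (T : H →ₗ[ℂ] H) : Set H) := by
  have hs : (LinearMap.range (T : H →ₗ[ℂ] H) : Set H) = (LinearMap.ker (1 - T * G : H →ₗ[ℂ] H) : Set H) := by
    ext x
    simp only [SetLike.mem_coe, LinearMap.mem_range, LinearMap.mem_ker]
    constructor
    · rintro ⟨v, rfl⟩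
      have hv := DFunLike.congr_fun h v
      simp only [ContinuousLinearMap.mul_apply] at hv
      simp [ContinuousLinearMap.sub_apply, ContinuousLinearMap.mul_apply, hv]
    · intro hx
      have : x - T (G x) = 0 := by
        simpa [ContinuousLinearMap.sub_apply, ContinuousLinearMap.mul_apply] using hx
      exact ⟨G x, (sub_eq_zero.mp this).symm⟩
  rw [hs]
  exact isClosed_ker (1 - T * G)

/-- A bounded operator with closed range has a Moore–Penrose inverse. -/
lemma aux_mp_of_closed (T : H →L[ℂ] H) (hc : IsClosed (LinearMap.range (T : H →ₗ[ℂ] H) : Set H)) :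
    ∃ X, IsMPInv T X := by
  set K : Submodule ℂ H := (LinearMap.ker (T : H →ₗ[ℂ] H))ᗮ with hKdef
  set R : Submodule ℂ H := LinearMap.range (T : H →ₗ[ℂ] H) with hRdef
  haveI : CompleteSpace R := hc.completeSpace_coe
  haveI : CompleteSpace (LinearMap.ker (T : H →ₗ[ℂ] H)) := (isClosed_ker T).completeSpace_coe
  haveI : CompleteSpace K := (Submodule.isClosed_orthogonal _).completeSpace_coe
  have hKo : Kᗮ = LinearMap.ker (T : H →ₗ[ℂ] H) := Submodule.orthogonal_orthogonal _
  have hTproj : ∀ v : H, T ((Submodule.orthogonalProjectionOnto K v : H)) = T v := by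
    intro v
    have hsplit : (Submodule.orthogonalProjectionOnto K v : H) + (Submodule.orthogonalProjectionOnto Kᗮ v : H) = v :=
      Submodule.starProjection_add_starProjection_orthogonal (K := K) v
    set w : H := ((Submodule.orthogonalProjectionOnto Kᗮ v : H)) with hwdef
    have hwmem : w ∈ Kᗮ := (Submodule.orthogonalProjectionOnto Kᗮ v).2
    rw [hKo] at hwmem
    have hw0 : T w = 0 := hwmem
    conv_rhs => rw [← hsplit]
    rw [map_add, hw0, add_zero]
  let T₁ : K →L[ℂ] R := (T.comp K.subtypeL).codRestrict R (fun x => ⟨x.1, rfl⟩)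
  have hT₁ : ∀ x : K, ((T₁ x : H)) = T x.1 := fun x => rfl
  have hinj : LinearMap.ker (T₁ : K →ₗ[ℂ] R) = ⊥ := by
    rw [Submodule.eq_bot_iff]
    rintro x hx
    rw [LinearMap.mem_ker] at hx
    have hx1 : T x.1 = 0 := by
      have := congrArg (Subtype.val) hx
      simpa [hT₁] using this
    have hker : x.1 ∈ LinearMap.ker (T : H →ₗ[ℂ] H) := hx1
    have : x.1 = 0 :=
      Submodule.disjoint_def.1 (Submodule.orthogonal_disjoint (LinearMap.ker (T : H →ₗ[ℂ] H))).symm x.1 x.2 hker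
    exact Subtype.ext this
  have hsurj : LinearMap.range (T₁ : K →ₗ[ℂ] R) = ⊤ := by
    rw [LinearMap.range_eq_top]
    rintro ⟨y, hy⟩
    obtain ⟨v, hv⟩ := hy
    refine ⟨Submodule.orthogonalProjectionOnto K v, Subtype.ext ?_⟩
    change T (Submodule.orthogonalProjectionOnto K v : H) = y
    exact (hTproj v).trans hv
  let e := ContinuousLinearEquiv.ofBijective T₁ hinj hsurj
  have he : ∀ x : K, e x = T₁ x := fun x => rfl
  let X : H →L[ℂ] H := K.subtypeL ∘L ((e.symm : R →L[ℂ] K) ∘L (Submodule.orthogonalProjectionOnto R))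
  have hX : ∀ v : H, X v = ((e.symm (Submodule.orthogonalProjectionOnto R v) : K) : H) := fun v => rfl
  have hTX : ∀ v : H, T (X v) = (Submodule.orthogonalProjectionOnto R v : H) := by
    intro v
    rw [hX]
    have := congrArg Subtype.val (e.apply_symm_apply (Submodule.orthogonalProjectionOnto R v))
    rw [he] at this
    rw [← this]; rfl
  have hprojR : ∀ v : H, Submodule.orthogonalProjectionOnto R (T v) = ⟨T v, ⟨v, rfl⟩⟩ := by
    intro v
    exact Submodule.orthogonalProjectionOnto_mem_subspace_eq_self (⟨T v, ⟨v, rfl⟩⟩ : R)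
  have hXT : ∀ v : H, X (T v) = (Submodule.orthogonalProjectionOnto K v : H) := by
    intro v
    rw [hX, hprojR]
    have : e (Submodule.orthogonalProjectionOnto K v) = ⟨T v, ⟨v, rfl⟩⟩ := by
      rw [he]
      apply Subtype.ext
      rw [hT₁]
      exact hTproj v
    rw [← this, e.symm_apply_apply]
  have hTXop : T ∘L X = R.subtypeL ∘L Submodule.orthogonalProjectionOnto R := by
    ext v; exact hTX v
  have hXTop : X ∘L T = K.subtypeL ∘L Submodule.orthogonalProjectionOnto K := by
    ext v; exact hXT v
  refine ⟨X, ?_, ?_, ?_, ?_⟩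
  · ext v
    show T (X (T v)) = T v
    rw [hXT, hTproj]
  · ext v
    show X (T (X v)) = X v
    rw [hTX, hX, hX]
    congr 2
    exact Submodule.orthogonalProjectionOnto_mem_subspace_eq_self (Submodule.orthogonalProjectionOnto R v)
  · rw [hTXop]
    exact (isSelfAdjoint_starProjection R).adjoint_eq
  · rw [hXTop]
    exact (isSelfAdjoint_starProjection K).adjoint_eq

/-- The parallel sum is M-P invertible iff both summands are. -/
theorem parallel_sum_mp_invertible (A B D : H →L[ℂ] H) (hD : IsMPInv (A + B) D)
    (h1 : A ∘L D ∘L (A + B) = A) (h2 : (A + B) ∘L D ∘L B = B) :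
    ((∃ X, IsMPInv A X) ∧ (∃ Y, IsMPInv B Y)) ↔ (∃ Z, IsMPInv (A ∘L D ∘L B) Z) := by
  set T : H →L[ℂ] H := A + B with hT
  have hm1 : A * (D * T) = A := h1
  have hm2 : T * (D * B) = B := h2
  have hmT : T * (D * T) = T := hD.1
  have hBT : B = T - A := by rw [hT]; abel
  have hAT : A = T - B := by rw [hT]; abel
  have hTDA : T * (D * A) = A := by
    calc T * (D * A) = T * (D * T) - T * (D * B) := by
          rw [hAT]; simp only [mul_sub, sub_mul]
    _ = A := by rw [hmT, hm2, ← hAT]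
  have hBDT : B * (D * T) = B := by
    calc B * (D * T) = T * (D * T) - A * (D * T) := by
          rw [hBT]; simp only [mul_sub, sub_mul]
    _ = B := by rw [hmT, hm1, ← hBT]
  have hADB_eq : A * (D * B) = A - A * (D * A) := by
    calc A * (D * B) = A * (D * T) - A * (D * A) := by
          conv_lhs => rw [hBT]
          simp only [mul_sub]
    _ = A - A * (D * A) := by rw [hm1]
  have hBDA_eq : B * (D * A) = B - B * (D * B) := by
    calc B * (D * A) = B * (D * T) - B * (D * B) := by
          conv_lhs => rw [hAT]
          simp only [mul_sub]
    _ = B - B * (D * B) := by rw [hBDT]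
  have hcomm : A * (D * B) = B * (D * A) := by
    have step : A * (D * B) = T * (D * B) - B * (D * B) := by
      conv_lhs => rw [hAT]
      simp only [sub_mul]
    rw [step, hm2]
    exact hBDA_eq.symm
  set P : H →L[ℂ] H := A ∘L D ∘L B with hPdef
  have hPm : P = A * (D * B) := rfl
  have hrange : (LinearMap.range (P : H →ₗ[ℂ] H) : Set H)
      = (LinearMap.range (A : H →ₗ[ℂ] H) : Set H) ∩ (LinearMap.range (B : H →ₗ[ℂ] H) : Set H) := by
    ext x
    simp only [Set.mem_inter_iff, SetLike.mem_coe, LinearMap.mem_range, ContinuousLinearMap.coe_coe]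
    constructor
    · rintro ⟨v, rfl⟩
      constructor
      · exact ⟨D (B v), rfl⟩
      · refine ⟨D (A v), ?_⟩
        have hc := DFunLike.congr_fun hcomm v
        simp only [ContinuousLinearMap.mul_apply] at hc
        show B (D (A v)) = P v
        rw [← hc]; rfl
    · rintro ⟨⟨u, hu⟩, ⟨v, hv⟩⟩
      refine ⟨u + v, ?_⟩
      have hPu : P u = B (D x) := by
        have := DFunLike.congr_fun hcomm u
        simp only [ContinuousLinearMap.mul_apply] at this
        show A (D (B u)) = B (D x)
        rw [this, hu]
      have hPv : P v = A (D x) := by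
        show A (D (B v)) = A (D x)
        rw [hv]
      have hx : T (D x) = x := by
        have := DFunLike.congr_fun hTDA u
        simp only [ContinuousLinearMap.mul_apply] at this
        rw [← hu]
        exact this
      have hPuv : P (u + v) = B (D x) + A (D x) := by rw [map_add, hPu, hPv]
      have hsum : B (D x) + A (D x) = T (D x) := by
        rw [hT, ContinuousLinearMap.add_apply, add_comm]
      rw [hPuv, hsum, hx]
  constructor
  · rintro ⟨⟨X, hX⟩, ⟨Y, hY⟩⟩
    have cA : IsClosed (LinearMap.range (A : H →ₗ[ℂ] H) : Set H) := aux_closed_range A X hX.1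
    have cB : IsClosed (LinearMap.range (B : H →ₗ[ℂ] H) : Set H) := aux_closed_range B Y hY.1
    have cP : IsClosed (LinearMap.range (P : H →ₗ[ℂ] H) : Set H) := by
      rw [hrange]; exact cA.inter cB
    exact aux_mp_of_closed P cP
  · rintro ⟨Z, hZ⟩
    have hZ1 : P * (Z * P) = P := hZ.1
    constructor
    · have hAGA : A * ((D + D * (B * (Z * (B * D)))) * A) = A := by
        have key : A * (D * (B * (Z * (B * (D * A))))) = P * (Z * P) := by
          rw [hPm, ← hcomm]
          simp only [mul_assoc]
        calc A * ((D + D * (B * (Z * (B * D)))) * A)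
            = A * (D * A) + A * (D * (B * (Z * (B * (D * A))))) := by
              simp only [add_mul, mul_add, mul_assoc]
        _ = A * (D * A) + (A - A * (D * A)) := by rw [key, hZ1, hPm, hADB_eq]
        _ = A := by abel
      exact aux_mp_of_closed A (aux_closed_range A _ hAGA)
    · have hBGB : B * ((D + D * (A * (Z * (A * D)))) * B) = B := by
        have key : B * (D * (A * (Z * (A * (D * B))))) = P * (Z * P) := by
          rw [hPm, hcomm]
          simp only [mul_assoc]
        calc B * ((D + D * (A * (Z * (A * D)))) * B)
            = B * (D * B) + B * (D * (A * (Z * (A * (D * B))))) := by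
              simp only [add_mul, mul_add, mul_assoc]
        _ = B * (D * B) + (B - B * (D * B)) := by rw [key, hZ1, hPm, hcomm, hBDA_eq]
        _ = B := by abel
      exact aux_mp_of_closed B (aux_closed_range B _ hBGB)
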